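/- Let (M, I) be an almost complex 6-manifold with Hermitian form ω and Ω a (3,0)-form such that dω = 3λ Re Ω for a real constant λ ≠ 0. Then d^{0,1}Ω = 0, d^{1,0}Ω̄ = 0, and dΩ = d^{-1,2}Ω = -d^{2,-1}Ω̄; in particular dΩ is a (2,2)-form. -/
import Mathlib


/-!
STATEMENT 7: (algebraic model of the bigraded algebra of complex-valued forms on an
almost complex 6-manifold `(M,I)`)  Here `Ω p q` is the space of `(p,q)`-forms, `π p q`
the Hodge-bidegree projections, `d` the exterior derivative (decomposing as
`d^{2,-1} + d^{1,0} + d^{0,1} + d^{-1,2}`), and `σ` complex conjugation.  Given a real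
Hermitian form `ω ∈ Λ^{1,1}` and `Ωf ∈ Λ^{3,0}` with `dω = 3λ Re Ωf`, `λ ∈ ℝ`, `λ ≠ 0`,
we conclude: `d^{0,1}Ωf = 0`, `d^{1,0}(conj Ωf) = 0`, and
`dΩf = d^{-1,2}Ωf = -d^{2,-1}(conj Ωf)`; in particular `dΩf` is a `(2,2)`-form.
-/
theorem stmt_7 {A : Type*} [Ring A] [Algebra ℂ A]
    (Ω : ℤ → ℤ → Submodule ℂ A)
    (π : ℤ → ℤ → (A →ₗ[ℂ] A))
    (d : A →ₗ[ℂ] A)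
    (σ : A →ₗ[ℝ] A)
    -- the manifold has complex dimension 3:
    (hdim : ∀ p q : ℤ, (p < 0 ∨ q < 0 ∨ 3 < p ∨ 3 < q) → Ω p q = ⊥)
    -- bidegree projections:
    (hπmem : ∀ p q (x : A), π p q x ∈ Ω p q)
    (hπid : ∀ p q, ∀ x ∈ Ω p q, π p q x = x)
    (hπorth : ∀ p q p' q', (p ≠ p' ∨ q ≠ q') → ∀ x ∈ Ω p q, π p' q' x = 0)
    -- the exterior differential has the four components d^{2,-1}, d^{1,0}, d^{0,1}, d^{-1,2}:
    (hd4 : ∀ p q, ∀ α ∈ Ω p q, d α =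
      π (p + 2) (q - 1) (d α) + π (p + 1) q (d α) + π p (q + 1) (d α) + π (p - 1) (q + 2) (d α))
    (hd2 : ∀ x : A, d (d x) = 0)
    -- complex conjugation:
    (hσσ : ∀ x, σ (σ x) = x)
    (hσI : ∀ x : A, σ (Complex.I • x) = -(Complex.I • σ x))
    (hσΩ : ∀ p q, ∀ x ∈ Ω p q, σ x ∈ Ω q p)
    (hσd : ∀ x, σ (d x) = d (σ x))
    -- the SU(3)-structure data:
    (ω Ωf : A) (hω : ω ∈ Ω 1 1) (hωreal : σ ω = ω) (hΩf : Ωf ∈ Ω 3 0)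
    (lam : ℝ) (hlam : lam ≠ 0)
    (hdω : d ω = (((3 : ℂ) * (lam : ℂ)) / 2) • (Ωf + σ Ωf)) :
    π 3 1 (d Ωf) = 0 ∧
    π 1 3 (d (σ Ωf)) = 0 ∧
    d Ωf = π 2 2 (d Ωf) ∧
    d Ωf = -π 2 2 (d (σ Ωf)) ∧
    d Ωf ∈ Ω 2 2 := by
  have hπbot : ∀ p q (x : A), Ω p q = ⊥ → π p q x = 0 := by
    intro p q x h
    have := hπmem p q x
    rw [h, Submodule.mem_bot] at this
    exact this
  have hσΩf : σ Ωf ∈ Ω 0 3 := hσΩ 3 0 Ωf hΩf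
  -- d² ω = 0 gives dΩf = -d(σΩf)
  have hc : ((3 : ℂ) * (lam : ℂ)) / 2 ≠ 0 := by
    apply div_ne_zero _ two_ne_zero
    exact mul_ne_zero (by norm_num) (Complex.ofReal_ne_zero.mpr hlam)
  have hsum : d Ωf + d (σ Ωf) = 0 := by
    have h0 : d (d ω) = 0 := hd2 ω
    rw [hdω, map_smul, map_add] at h0
    exact (smul_eq_zero.mp h0).resolve_left hc
  have hneg : d Ωf = -d (σ Ωf) := by linear_combination (norm := module) hsum
  -- decomposition of dΩf
  have hdΩ : d Ωf = π 3 1 (d Ωf) + π 2 2 (d Ωf) := by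
    have h := hd4 3 0 Ωf hΩf
    norm_num at h
    rw [hπbot 5 (-1) _ (hdim 5 (-1) (by norm_num)),
      hπbot 4 0 _ (hdim 4 0 (by norm_num))] at h
    simpa using h
  have hdσ : d (σ Ωf) = π 2 2 (d (σ Ωf)) + π 1 3 (d (σ Ωf)) := by
    have h := hd4 0 3 (σ Ωf) hσΩf
    norm_num at h
    rw [hπbot 0 4 _ (hdim 0 4 (by norm_num)),
      hπbot (-1) 5 _ (hdim (-1) 5 (by norm_num))] at h
    simpa using h
  have h31σ : π 3 1 (d (σ Ωf)) = 0 := by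
    rw [hdσ, map_add,
      hπorth 2 2 3 1 (Or.inl (by norm_num)) _ (hπmem 2 2 _),
      hπorth 1 3 3 1 (Or.inl (by norm_num)) _ (hπmem 1 3 _), add_zero]
  have h13Ω : π 1 3 (d Ωf) = 0 := by
    rw [hdΩ, map_add,
      hπorth 3 1 1 3 (Or.inl (by norm_num)) _ (hπmem 3 1 _),
      hπorth 2 2 1 3 (Or.inl (by norm_num)) _ (hπmem 2 2 _), add_zero]
  have h31 : π 3 1 (d Ωf) = 0 := by rw [hneg, map_neg, h31σ, neg_zero]
  have h13 : π 1 3 (d (σ Ωf)) = 0 := by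
    have : d (σ Ωf) = -d Ωf := by linear_combination (norm := module) hsum
    rw [this, map_neg, h13Ω, neg_zero]
  have hmain : d Ωf = π 2 2 (d Ωf) := by
    conv_lhs => rw [hdΩ, h31, zero_add]
  have hmain2 : d Ωf = -π 2 2 (d (σ Ωf)) := by
    conv_lhs => rw [hneg, hdσ, h13, add_zero]
  exact ⟨h31, h13, hmain, hmain2, hmain ▸ hπmem 2 2 (d Ωf)⟩
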